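/- Let X be a space and (𝒰ₙ) a sequence of countable Borel γ-covers with bijective enumerations 𝒰ₙ = {Uⁿₘ : m ∈ ℕ}. Define Ψ : X → ℕ^ℕ by Ψ(x)(n) = min{m : x ∈ Uⁿₖ for all k ≥ m}. If Ψ[X] is not finitely dominating, then there are infinite subsets 𝒱ₙ ⊆ 𝒰ₙ with {⋂𝒱ₙ : n ∈ ℕ} an ω-cover of X. -/

import Mathlib

open Set Filter

def IsOmegaCover {α : Type*} (𝒰 : Set (Set α)) : Prop :=
  univ ∉ 𝒰 ∧ ∀ F : Set α, F.Finite → ∃ U ∈ 𝒰, F ⊆ U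

/-- `Y ⊆ ℕ^ℕ` is finitely dominating: maxima of finite subfamilies dominate. -/
def FinitelyDominating (Y : Set (ℕ → ℕ)) : Prop :=
  ∀ g : ℕ → ℕ, ∃ T : Finset (ℕ → ℕ), ↑T ⊆ Y ∧ T.Nonempty ∧
    ∀ᶠ n in atTop, g n ≤ T.sup (fun f => f n)

/-- Given a sequence of bijectively enumerated countable Borel γ-covers `𝒰ₙ = {Uⁿₘ : m}`
of the space, if the image of the modulus map Ψ(x)(n) = min{m : ∀ k ≥ m, x ∈ Uⁿₖ} is not
finitely dominating, then there are infinite 𝒱ₙ ⊆ 𝒰ₙ with {⋂𝒱ₙ : n} an ω-cover. -/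
theorem stmt10 {α : Type*} [MeasurableSpace α] (U : ℕ → ℕ → Set α)
    (hinj : ∀ n, Function.Injective (U n))
    (hborel : ∀ n m, MeasurableSet (U n m))
    (hne : ∀ n m, U n m ≠ univ)
    (hγ : ∀ n, ∀ x : α, {m : ℕ | x ∉ U n m}.Finite)
    (Ψ : α → ℕ → ℕ)
    (hΨ : ∀ x n, Ψ x n = sInf {m : ℕ | ∀ k ≥ m, x ∈ U n k})
    (hnd : ¬ FinitelyDominating (Set.range Ψ)) :
    ∃ 𝒱 : ℕ → Set (Set α), (∀ n, 𝒱 n ⊆ Set.range (U n) ∧ (𝒱 n).Infinite) ∧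
      IsOmegaCover (Set.range fun n => ⋂₀ 𝒱 n) := by
  rw [FinitelyDominating] at hnd
  push_neg at hnd
  obtain ⟨g, hg⟩ := hnd
  -- key: Ψ x n ≤ g n → x ∈ U n k for all k ≥ g n
  have hkey : ∀ x n, Ψ x n ≤ g n → ∀ k ≥ g n, x ∈ U n k := by
    intro x n hle k hk
    have hne' : {m : ℕ | ∀ k ≥ m, x ∈ U n k}.Nonempty := by
      obtain ⟨N, hN⟩ := (hγ n x).bddAbove
      refine ⟨N + 1, fun j hj => ?_⟩
      by_contra hx
      exact absurd (hN hx) (by omega)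
    have hmem := Nat.sInf_mem hne'
    rw [← hΨ x n] at hmem
    exact hmem k (le_trans (le_trans hle hk) le_rfl)
  refine ⟨fun n => U n '' Set.Ici (g n), fun n => ⟨image_subset_range _ _, ?_⟩, ?_, ?_⟩
  · exact Set.Infinite.image ((hinj n).injOn) (Set.Ici_infinite _)
  · rintro ⟨n, hn⟩
    apply hne n (g n)
    have hsub : (⋂₀ (U n '' Set.Ici (g n))) ⊆ U n (g n) :=
      sInter_subset_of_mem ⟨g n, Set.mem_Ici.2 le_rfl, rfl⟩
    simp only at hn
    rw [hn] at hsub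
    exact eq_univ_of_univ_subset hsub
  · intro F hF
    rcases F.eq_empty_or_nonempty with rfl | ⟨x0, hx0⟩
    · exact ⟨_, ⟨0, rfl⟩, empty_subset _⟩
    · classical
      set T : Finset (ℕ → ℕ) := hF.toFinset.image Ψ with hT
      have hTsub : ↑T ⊆ Set.range Ψ := by
        intro f hf
        simp only [hT, Finset.coe_image] at hf
        obtain ⟨x, _, rfl⟩ := hf
        exact ⟨x, rfl⟩
      have hTne : T.Nonempty := ⟨Ψ x0, by rw [hT]; exact Finset.mem_image_of_mem _ (hF.mem_toFinset.2 hx0)⟩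
      have := hg T hTsub hTne
      obtain ⟨n, hn⟩ := this.exists
      refine ⟨_, ⟨n, rfl⟩, fun x hx => ?_⟩
      have hΨle : Ψ x n ≤ g n := by
        have hmemT : Ψ x ∈ T := by
          rw [hT]; exact Finset.mem_image_of_mem _ (hF.mem_toFinset.2 hx)
        exact le_of_lt (lt_of_le_of_lt (Finset.le_sup (f := fun f => f n) hmemT) hn)
      rintro S ⟨m, hm, rfl⟩
      exact hkey x n hΨle m hm
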